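/- If C is an invertible complex 4×4 matrix with determinant 1 satisfying C⁻¹ γ_μ C = -γ_μᵀ for all four Euclidean gamma matrices γ_μ (which satisfy γ_μ γ_ν + γ_ν γ_μ = 2 δ_{μν} I and γ_μ† = γ_μ), then C satisfies Cᵀ = -C and C† = C⁻¹. -/

import Mathlib

open Matrix

set_option maxHeartbeats 2000000 in
/-- If `C` is an invertible complex 4×4 matrix with determinant 1 satisfying
`C⁻¹ γ_μ C = -γ_μᵀ` for Euclidean gamma matrices, then `Cᵀ = -C` and `Cᴴ = C⁻¹`. -/
theorem stmt0 (γ : Fin 4 → Matrix (Fin 4) (Fin 4) ℂ)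
    (hcliff : ∀ μ ν, γ μ * γ ν + γ ν * γ μ = (if μ = ν then (2 : ℂ) else 0) • 1)
    (hherm : ∀ μ, (γ μ)ᴴ = γ μ)
    (C : Matrix (Fin 4) (Fin 4) ℂ) (hC : IsUnit C) (hdet : C.det = 1)
    (hconj : ∀ μ, C⁻¹ * γ μ * C = -(γ μ)ᵀ) :
    Cᵀ = -C ∧ Cᴴ = C⁻¹ := by
  have hsq : ∀ μ, γ μ * γ μ = 1 := by
    intro μ
    have h := hcliff μ μ
    rw [if_pos rfl] at h
    have h2 : (2:ℂ) • (γ μ * γ μ) = (2:ℂ) • (1 : Matrix (Fin 4) (Fin 4) ℂ) := by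
      rw [two_smul]; exact h
    exact smul_right_injective _ (by norm_num) h2
  have hanti : ∀ μ ν, μ ≠ ν → γ μ * γ ν = -(γ ν * γ μ) := by
    intro μ ν h
    have h2 := hcliff μ ν
    rw [if_neg h, zero_smul] at h2
    rw [eq_neg_iff_add_eq_zero]; exact h2
  have hsq' : ∀ (μ : Fin 4) (x : Matrix (Fin 4) (Fin 4) ℂ), γ μ * (γ μ * x) = x := by
    intro μ x; rw [← mul_assoc, hsq, one_mul]
  have w10 : γ 1 * γ 0 = -(γ 0 * γ 1) := hanti 1 0 (by decide)
  have w10' : ∀ (x : Matrix (Fin 4) (Fin 4) ℂ), γ 1 * (γ 0 * x) = -(γ 0 * (γ 1 * x)) := by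
    intro x; rw [← mul_assoc, w10, neg_mul, mul_assoc]
  have w20 : γ 2 * γ 0 = -(γ 0 * γ 2) := hanti 2 0 (by decide)
  have w20' : ∀ (x : Matrix (Fin 4) (Fin 4) ℂ), γ 2 * (γ 0 * x) = -(γ 0 * (γ 2 * x)) := by
    intro x; rw [← mul_assoc, w20, neg_mul, mul_assoc]
  have w21 : γ 2 * γ 1 = -(γ 1 * γ 2) := hanti 2 1 (by decide)
  have w21' : ∀ (x : Matrix (Fin 4) (Fin 4) ℂ), γ 2 * (γ 1 * x) = -(γ 1 * (γ 2 * x)) := by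
    intro x; rw [← mul_assoc, w21, neg_mul, mul_assoc]
  have w30 : γ 3 * γ 0 = -(γ 0 * γ 3) := hanti 3 0 (by decide)
  have w30' : ∀ (x : Matrix (Fin 4) (Fin 4) ℂ), γ 3 * (γ 0 * x) = -(γ 0 * (γ 3 * x)) := by
    intro x; rw [← mul_assoc, w30, neg_mul, mul_assoc]
  have w31 : γ 3 * γ 1 = -(γ 1 * γ 3) := hanti 3 1 (by decide)
  have w31' : ∀ (x : Matrix (Fin 4) (Fin 4) ℂ), γ 3 * (γ 1 * x) = -(γ 1 * (γ 3 * x)) := by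
    intro x; rw [← mul_assoc, w31, neg_mul, mul_assoc]
  have w32 : γ 3 * γ 2 = -(γ 2 * γ 3) := hanti 3 2 (by decide)
  have w32' : ∀ (x : Matrix (Fin 4) (Fin 4) ℂ), γ 3 * (γ 2 * x) = -(γ 2 * (γ 3 * x)) := by
    intro x; rw [← mul_assoc, w32, neg_mul, mul_assoc]
  have key : ∀ (X : Matrix (Fin 4) (Fin 4) ℂ) (μ : Fin 4), γ μ * X = -(X * γ μ) → Matrix.trace X = 0 := by
    intro X μ h
    have h1 : Matrix.trace (γ μ * X * γ μ) = Matrix.trace X := by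
      rw [Matrix.trace_mul_comm, ← mul_assoc, hsq, one_mul]
    have h2 : Matrix.trace (γ μ * X * γ μ) = -Matrix.trace X := by
      rw [h, neg_mul, Matrix.trace_neg, mul_assoc, hsq, mul_one]
    have h3 := h1.symm.trans h2
    have h4 : (2:ℂ) * Matrix.trace X = 0 := by linear_combination h3
    simpa using h4
  have t0 : Matrix.trace (γ 0) = 0 := key _ 1 (by simp only [mul_assoc, hsq, hsq', w10, w20, w21, w30, w31, w32, w10', w20', w21', w30', w31', w32', one_mul, mul_one, mul_neg, neg_mul, neg_neg])
  have t1 : Matrix.trace (γ 1) = 0 := key _ 0 (by simp only [mul_assoc, hsq, hsq', w10, w20, w21, w30, w31, w32, w10', w20', w21', w30', w31', w32', one_mul, mul_one, mul_neg, neg_mul, neg_neg])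
  have t2 : Matrix.trace (γ 2) = 0 := key _ 0 (by simp only [mul_assoc, hsq, hsq', w10, w20, w21, w30, w31, w32, w10', w20', w21', w30', w31', w32', one_mul, mul_one, mul_neg, neg_mul, neg_neg])
  have t3 : Matrix.trace (γ 3) = 0 := key _ 0 (by simp only [mul_assoc, hsq, hsq', w10, w20, w21, w30, w31, w32, w10', w20', w21', w30', w31', w32', one_mul, mul_one, mul_neg, neg_mul, neg_neg])
  have t01 : Matrix.trace (γ 0 * (γ 1)) = 0 := key _ 0 (by simp only [mul_assoc, hsq, hsq', w10, w20, w21, w30, w31, w32, w10', w20', w21', w30', w31', w32', one_mul, mul_one, mul_neg, neg_mul, neg_neg])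
  have t02 : Matrix.trace (γ 0 * (γ 2)) = 0 := key _ 0 (by simp only [mul_assoc, hsq, hsq', w10, w20, w21, w30, w31, w32, w10', w20', w21', w30', w31', w32', one_mul, mul_one, mul_neg, neg_mul, neg_neg])
  have t03 : Matrix.trace (γ 0 * (γ 3)) = 0 := key _ 0 (by simp only [mul_assoc, hsq, hsq', w10, w20, w21, w30, w31, w32, w10', w20', w21', w30', w31', w32', one_mul, mul_one, mul_neg, neg_mul, neg_neg])
  have t12 : Matrix.trace (γ 1 * (γ 2)) = 0 := key _ 1 (by simp only [mul_assoc, hsq, hsq', w10, w20, w21, w30, w31, w32, w10', w20', w21', w30', w31', w32', one_mul, mul_one, mul_neg, neg_mul, neg_neg])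
  have t13 : Matrix.trace (γ 1 * (γ 3)) = 0 := key _ 1 (by simp only [mul_assoc, hsq, hsq', w10, w20, w21, w30, w31, w32, w10', w20', w21', w30', w31', w32', one_mul, mul_one, mul_neg, neg_mul, neg_neg])
  have t23 : Matrix.trace (γ 2 * (γ 3)) = 0 := key _ 2 (by simp only [mul_assoc, hsq, hsq', w10, w20, w21, w30, w31, w32, w10', w20', w21', w30', w31', w32', one_mul, mul_one, mul_neg, neg_mul, neg_neg])
  have t012 : Matrix.trace (γ 0 * (γ 1 * (γ 2))) = 0 := key _ 3 (by simp only [mul_assoc, hsq, hsq', w10, w20, w21, w30, w31, w32, w10', w20', w21', w30', w31', w32', one_mul, mul_one, mul_neg, neg_mul, neg_neg])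
  have t013 : Matrix.trace (γ 0 * (γ 1 * (γ 3))) = 0 := key _ 2 (by simp only [mul_assoc, hsq, hsq', w10, w20, w21, w30, w31, w32, w10', w20', w21', w30', w31', w32', one_mul, mul_one, mul_neg, neg_mul, neg_neg])
  have t023 : Matrix.trace (γ 0 * (γ 2 * (γ 3))) = 0 := key _ 1 (by simp only [mul_assoc, hsq, hsq', w10, w20, w21, w30, w31, w32, w10', w20', w21', w30', w31', w32', one_mul, mul_one, mul_neg, neg_mul, neg_neg])
  have t123 : Matrix.trace (γ 1 * (γ 2 * (γ 3))) = 0 := key _ 0 (by simp only [mul_assoc, hsq, hsq', w10, w20, w21, w30, w31, w32, w10', w20', w21', w30', w31', w32', one_mul, mul_one, mul_neg, neg_mul, neg_neg])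
  have t0123 : Matrix.trace (γ 0 * (γ 1 * (γ 2 * (γ 3)))) = 0 := key _ 0 (by simp only [mul_assoc, hsq, hsq', w10, w20, w21, w30, w31, w32, w10', w20', w21', w30', w31', w32', one_mul, mul_one, mul_neg, neg_mul, neg_neg])
  have key16 : ∀ c : Fin 16 → ℂ, c 0 • ((1 : Matrix (Fin 4) (Fin 4) ℂ)) + c 1 • (γ 0) + c 2 • (γ 1) + c 3 • (γ 2) + c 4 • (γ 3) + c 5 • (γ 0 * (γ 1)) + c 6 • (γ 0 * (γ 2)) + c 7 • (γ 0 * (γ 3)) + c 8 • (γ 1 * (γ 2)) + c 9 • (γ 1 * (γ 3)) + c 10 • (γ 2 * (γ 3)) + c 11 • (γ 0 * (γ 1 * (γ 2))) + c 12 • (γ 0 * (γ 1 * (γ 3))) + c 13 • (γ 0 * (γ 2 * (γ 3))) + c 14 • (γ 1 * (γ 2 * (γ 3))) + c 15 • (γ 0 * (γ 1 * (γ 2 * (γ 3)))) = 0 → ∀ i : Fin 16, c i = 0 := by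
    intro c hc
    have h0 : c 0 = 0 := by
      have h := congrArg (fun X => Matrix.trace (X * ((1 : Matrix (Fin 4) (Fin 4) ℂ)))) hc
      simp only [add_mul, smul_mul_assoc, zero_mul, mul_assoc, hsq, hsq', w10, w20, w21, w30, w31, w32, w10', w20', w21', w30', w31', w32', one_mul, mul_one, mul_neg, neg_mul, neg_neg, Matrix.trace_add,
        Matrix.trace_smul, Matrix.trace_neg, Matrix.trace_zero, Matrix.trace_one, t0, t1, t2, t3, t01, t02, t03, t12, t13, t23, t012, t013, t023, t123, t0123,
        smul_neg, smul_zero, add_zero, zero_add, neg_zero, smul_eq_mul, Fintype.card_fin,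
        Nat.cast_ofNat, neg_eq_zero, mul_eq_zero, OfNat.ofNat_ne_zero, or_false] at h
      linear_combination h / 4
    have h1 : c 1 = 0 := by
      have h := congrArg (fun X => Matrix.trace (X * (γ 0))) hc
      simp only [add_mul, smul_mul_assoc, zero_mul, mul_assoc, hsq, hsq', w10, w20, w21, w30, w31, w32, w10', w20', w21', w30', w31', w32', one_mul, mul_one, mul_neg, neg_mul, neg_neg, Matrix.trace_add,
        Matrix.trace_smul, Matrix.trace_neg, Matrix.trace_zero, Matrix.trace_one, t0, t1, t2, t3, t01, t02, t03, t12, t13, t23, t012, t013, t023, t123, t0123,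
        smul_neg, smul_zero, add_zero, zero_add, neg_zero, smul_eq_mul, Fintype.card_fin,
        Nat.cast_ofNat, neg_eq_zero, mul_eq_zero, OfNat.ofNat_ne_zero, or_false] at h
      linear_combination h / 4
    have h2 : c 2 = 0 := by
      have h := congrArg (fun X => Matrix.trace (X * (γ 1))) hc
      simp only [add_mul, smul_mul_assoc, zero_mul, mul_assoc, hsq, hsq', w10, w20, w21, w30, w31, w32, w10', w20', w21', w30', w31', w32', one_mul, mul_one, mul_neg, neg_mul, neg_neg, Matrix.trace_add,
        Matrix.trace_smul, Matrix.trace_neg, Matrix.trace_zero, Matrix.trace_one, t0, t1, t2, t3, t01, t02, t03, t12, t13, t23, t012, t013, t023, t123, t0123,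
        smul_neg, smul_zero, add_zero, zero_add, neg_zero, smul_eq_mul, Fintype.card_fin,
        Nat.cast_ofNat, neg_eq_zero, mul_eq_zero, OfNat.ofNat_ne_zero, or_false] at h
      linear_combination h / 4
    have h3 : c 3 = 0 := by
      have h := congrArg (fun X => Matrix.trace (X * (γ 2))) hc
      simp only [add_mul, smul_mul_assoc, zero_mul, mul_assoc, hsq, hsq', w10, w20, w21, w30, w31, w32, w10', w20', w21', w30', w31', w32', one_mul, mul_one, mul_neg, neg_mul, neg_neg, Matrix.trace_add,
        Matrix.trace_smul, Matrix.trace_neg, Matrix.trace_zero, Matrix.trace_one, t0, t1, t2, t3, t01, t02, t03, t12, t13, t23, t012, t013, t023, t123, t0123,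
        smul_neg, smul_zero, add_zero, zero_add, neg_zero, smul_eq_mul, Fintype.card_fin,
        Nat.cast_ofNat, neg_eq_zero, mul_eq_zero, OfNat.ofNat_ne_zero, or_false] at h
      linear_combination h / 4
    have h4 : c 4 = 0 := by
      have h := congrArg (fun X => Matrix.trace (X * (γ 3))) hc
      simp only [add_mul, smul_mul_assoc, zero_mul, mul_assoc, hsq, hsq', w10, w20, w21, w30, w31, w32, w10', w20', w21', w30', w31', w32', one_mul, mul_one, mul_neg, neg_mul, neg_neg, Matrix.trace_add,
        Matrix.trace_smul, Matrix.trace_neg, Matrix.trace_zero, Matrix.trace_one, t0, t1, t2, t3, t01, t02, t03, t12, t13, t23, t012, t013, t023, t123, t0123,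
        smul_neg, smul_zero, add_zero, zero_add, neg_zero, smul_eq_mul, Fintype.card_fin,
        Nat.cast_ofNat, neg_eq_zero, mul_eq_zero, OfNat.ofNat_ne_zero, or_false] at h
      linear_combination h / 4
    have h5 : c 5 = 0 := by
      have h := congrArg (fun X => Matrix.trace (X * (γ 0 * (γ 1)))) hc
      simp only [add_mul, smul_mul_assoc, zero_mul, mul_assoc, hsq, hsq', w10, w20, w21, w30, w31, w32, w10', w20', w21', w30', w31', w32', one_mul, mul_one, mul_neg, neg_mul, neg_neg, Matrix.trace_add,
        Matrix.trace_smul, Matrix.trace_neg, Matrix.trace_zero, Matrix.trace_one, t0, t1, t2, t3, t01, t02, t03, t12, t13, t23, t012, t013, t023, t123, t0123,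
        smul_neg, smul_zero, add_zero, zero_add, neg_zero, smul_eq_mul, Fintype.card_fin,
        Nat.cast_ofNat, neg_eq_zero, mul_eq_zero, OfNat.ofNat_ne_zero, or_false] at h
      linear_combination -h / 4
    have h6 : c 6 = 0 := by
      have h := congrArg (fun X => Matrix.trace (X * (γ 0 * (γ 2)))) hc
      simp only [add_mul, smul_mul_assoc, zero_mul, mul_assoc, hsq, hsq', w10, w20, w21, w30, w31, w32, w10', w20', w21', w30', w31', w32', one_mul, mul_one, mul_neg, neg_mul, neg_neg, Matrix.trace_add,
        Matrix.trace_smul, Matrix.trace_neg, Matrix.trace_zero, Matrix.trace_one, t0, t1, t2, t3, t01, t02, t03, t12, t13, t23, t012, t013, t023, t123, t0123,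
        smul_neg, smul_zero, add_zero, zero_add, neg_zero, smul_eq_mul, Fintype.card_fin,
        Nat.cast_ofNat, neg_eq_zero, mul_eq_zero, OfNat.ofNat_ne_zero, or_false] at h
      linear_combination -h / 4
    have h7 : c 7 = 0 := by
      have h := congrArg (fun X => Matrix.trace (X * (γ 0 * (γ 3)))) hc
      simp only [add_mul, smul_mul_assoc, zero_mul, mul_assoc, hsq, hsq', w10, w20, w21, w30, w31, w32, w10', w20', w21', w30', w31', w32', one_mul, mul_one, mul_neg, neg_mul, neg_neg, Matrix.trace_add,
        Matrix.trace_smul, Matrix.trace_neg, Matrix.trace_zero, Matrix.trace_one, t0, t1, t2, t3, t01, t02, t03, t12, t13, t23, t012, t013, t023, t123, t0123,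
        smul_neg, smul_zero, add_zero, zero_add, neg_zero, smul_eq_mul, Fintype.card_fin,
        Nat.cast_ofNat, neg_eq_zero, mul_eq_zero, OfNat.ofNat_ne_zero, or_false] at h
      linear_combination -h / 4
    have h8 : c 8 = 0 := by
      have h := congrArg (fun X => Matrix.trace (X * (γ 1 * (γ 2)))) hc
      simp only [add_mul, smul_mul_assoc, zero_mul, mul_assoc, hsq, hsq', w10, w20, w21, w30, w31, w32, w10', w20', w21', w30', w31', w32', one_mul, mul_one, mul_neg, neg_mul, neg_neg, Matrix.trace_add,
        Matrix.trace_smul, Matrix.trace_neg, Matrix.trace_zero, Matrix.trace_one, t0, t1, t2, t3, t01, t02, t03, t12, t13, t23, t012, t013, t023, t123, t0123,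
        smul_neg, smul_zero, add_zero, zero_add, neg_zero, smul_eq_mul, Fintype.card_fin,
        Nat.cast_ofNat, neg_eq_zero, mul_eq_zero, OfNat.ofNat_ne_zero, or_false] at h
      linear_combination -h / 4
    have h9 : c 9 = 0 := by
      have h := congrArg (fun X => Matrix.trace (X * (γ 1 * (γ 3)))) hc
      simp only [add_mul, smul_mul_assoc, zero_mul, mul_assoc, hsq, hsq', w10, w20, w21, w30, w31, w32, w10', w20', w21', w30', w31', w32', one_mul, mul_one, mul_neg, neg_mul, neg_neg, Matrix.trace_add,
        Matrix.trace_smul, Matrix.trace_neg, Matrix.trace_zero, Matrix.trace_one, t0, t1, t2, t3, t01, t02, t03, t12, t13, t23, t012, t013, t023, t123, t0123,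
        smul_neg, smul_zero, add_zero, zero_add, neg_zero, smul_eq_mul, Fintype.card_fin,
        Nat.cast_ofNat, neg_eq_zero, mul_eq_zero, OfNat.ofNat_ne_zero, or_false] at h
      linear_combination -h / 4
    have h10 : c 10 = 0 := by
      have h := congrArg (fun X => Matrix.trace (X * (γ 2 * (γ 3)))) hc
      simp only [add_mul, smul_mul_assoc, zero_mul, mul_assoc, hsq, hsq', w10, w20, w21, w30, w31, w32, w10', w20', w21', w30', w31', w32', one_mul, mul_one, mul_neg, neg_mul, neg_neg, Matrix.trace_add,
        Matrix.trace_smul, Matrix.trace_neg, Matrix.trace_zero, Matrix.trace_one, t0, t1, t2, t3, t01, t02, t03, t12, t13, t23, t012, t013, t023, t123, t0123,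
        smul_neg, smul_zero, add_zero, zero_add, neg_zero, smul_eq_mul, Fintype.card_fin,
        Nat.cast_ofNat, neg_eq_zero, mul_eq_zero, OfNat.ofNat_ne_zero, or_false] at h
      linear_combination -h / 4
    have h11 : c 11 = 0 := by
      have h := congrArg (fun X => Matrix.trace (X * (γ 0 * (γ 1 * (γ 2))))) hc
      simp only [add_mul, smul_mul_assoc, zero_mul, mul_assoc, hsq, hsq', w10, w20, w21, w30, w31, w32, w10', w20', w21', w30', w31', w32', one_mul, mul_one, mul_neg, neg_mul, neg_neg, Matrix.trace_add,
        Matrix.trace_smul, Matrix.trace_neg, Matrix.trace_zero, Matrix.trace_one, t0, t1, t2, t3, t01, t02, t03, t12, t13, t23, t012, t013, t023, t123, t0123,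
        smul_neg, smul_zero, add_zero, zero_add, neg_zero, smul_eq_mul, Fintype.card_fin,
        Nat.cast_ofNat, neg_eq_zero, mul_eq_zero, OfNat.ofNat_ne_zero, or_false] at h
      linear_combination -h / 4
    have h12 : c 12 = 0 := by
      have h := congrArg (fun X => Matrix.trace (X * (γ 0 * (γ 1 * (γ 3))))) hc
      simp only [add_mul, smul_mul_assoc, zero_mul, mul_assoc, hsq, hsq', w10, w20, w21, w30, w31, w32, w10', w20', w21', w30', w31', w32', one_mul, mul_one, mul_neg, neg_mul, neg_neg, Matrix.trace_add,
        Matrix.trace_smul, Matrix.trace_neg, Matrix.trace_zero, Matrix.trace_one, t0, t1, t2, t3, t01, t02, t03, t12, t13, t23, t012, t013, t023, t123, t0123,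
        smul_neg, smul_zero, add_zero, zero_add, neg_zero, smul_eq_mul, Fintype.card_fin,
        Nat.cast_ofNat, neg_eq_zero, mul_eq_zero, OfNat.ofNat_ne_zero, or_false] at h
      linear_combination -h / 4
    have h13 : c 13 = 0 := by
      have h := congrArg (fun X => Matrix.trace (X * (γ 0 * (γ 2 * (γ 3))))) hc
      simp only [add_mul, smul_mul_assoc, zero_mul, mul_assoc, hsq, hsq', w10, w20, w21, w30, w31, w32, w10', w20', w21', w30', w31', w32', one_mul, mul_one, mul_neg, neg_mul, neg_neg, Matrix.trace_add,
        Matrix.trace_smul, Matrix.trace_neg, Matrix.trace_zero, Matrix.trace_one, t0, t1, t2, t3, t01, t02, t03, t12, t13, t23, t012, t013, t023, t123, t0123,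
        smul_neg, smul_zero, add_zero, zero_add, neg_zero, smul_eq_mul, Fintype.card_fin,
        Nat.cast_ofNat, neg_eq_zero, mul_eq_zero, OfNat.ofNat_ne_zero, or_false] at h
      linear_combination -h / 4
    have h14 : c 14 = 0 := by
      have h := congrArg (fun X => Matrix.trace (X * (γ 1 * (γ 2 * (γ 3))))) hc
      simp only [add_mul, smul_mul_assoc, zero_mul, mul_assoc, hsq, hsq', w10, w20, w21, w30, w31, w32, w10', w20', w21', w30', w31', w32', one_mul, mul_one, mul_neg, neg_mul, neg_neg, Matrix.trace_add,
        Matrix.trace_smul, Matrix.trace_neg, Matrix.trace_zero, Matrix.trace_one, t0, t1, t2, t3, t01, t02, t03, t12, t13, t23, t012, t013, t023, t123, t0123,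
        smul_neg, smul_zero, add_zero, zero_add, neg_zero, smul_eq_mul, Fintype.card_fin,
        Nat.cast_ofNat, neg_eq_zero, mul_eq_zero, OfNat.ofNat_ne_zero, or_false] at h
      linear_combination -h / 4
    have h15 : c 15 = 0 := by
      have h := congrArg (fun X => Matrix.trace (X * (γ 0 * (γ 1 * (γ 2 * (γ 3)))))) hc
      simp only [add_mul, smul_mul_assoc, zero_mul, mul_assoc, hsq, hsq', w10, w20, w21, w30, w31, w32, w10', w20', w21', w30', w31', w32', one_mul, mul_one, mul_neg, neg_mul, neg_neg, Matrix.trace_add,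
        Matrix.trace_smul, Matrix.trace_neg, Matrix.trace_zero, Matrix.trace_one, t0, t1, t2, t3, t01, t02, t03, t12, t13, t23, t012, t013, t023, t123, t0123,
        smul_neg, smul_zero, add_zero, zero_add, neg_zero, smul_eq_mul, Fintype.card_fin,
        Nat.cast_ofNat, neg_eq_zero, mul_eq_zero, OfNat.ofNat_ne_zero, or_false] at h
      linear_combination h / 4
    intro i; fin_cases i <;> assumption
  have sum16 : ∀ f : Fin 16 → Matrix (Fin 4) (Fin 4) ℂ, ∑ i, f i = f 0 + f 1 + f 2 + f 3 + f 4 + f 5 + f 6 + f 7 + f 8 + f 9 + f 10 + f 11 + f 12 + f 13 + f 14 + f 15 := by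
    intro f
    rw [show (Finset.univ : Finset (Fin 16)) = {0,1,2,3,4,5,6,7,8,9,10,11,12,13,14,15} from by decide]
    rw [Finset.sum_insert (by decide)]
    rw [Finset.sum_insert (by decide)]
    rw [Finset.sum_insert (by decide)]
    rw [Finset.sum_insert (by decide)]
    rw [Finset.sum_insert (by decide)]
    rw [Finset.sum_insert (by decide)]
    rw [Finset.sum_insert (by decide)]
    rw [Finset.sum_insert (by decide)]
    rw [Finset.sum_insert (by decide)]
    rw [Finset.sum_insert (by decide)]
    rw [Finset.sum_insert (by decide)]
    rw [Finset.sum_insert (by decide)]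
    rw [Finset.sum_insert (by decide)]
    rw [Finset.sum_insert (by decide)]
    rw [Finset.sum_insert (by decide)]
    rw [Finset.sum_singleton]
    abel
  have v0 : (![(1 : Matrix (Fin 4) (Fin 4) ℂ), γ 0, γ 1, γ 2, γ 3, γ 0 * (γ 1), γ 0 * (γ 2), γ 0 * (γ 3), γ 1 * (γ 2), γ 1 * (γ 3), γ 2 * (γ 3), γ 0 * (γ 1 * (γ 2)), γ 0 * (γ 1 * (γ 3)), γ 0 * (γ 2 * (γ 3)), γ 1 * (γ 2 * (γ 3)), γ 0 * (γ 1 * (γ 2 * (γ 3)))] : Fin 16 → Matrix (Fin 4) (Fin 4) ℂ) 0 = (1 : Matrix (Fin 4) (Fin 4) ℂ) := rfl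
  have v1 : (![(1 : Matrix (Fin 4) (Fin 4) ℂ), γ 0, γ 1, γ 2, γ 3, γ 0 * (γ 1), γ 0 * (γ 2), γ 0 * (γ 3), γ 1 * (γ 2), γ 1 * (γ 3), γ 2 * (γ 3), γ 0 * (γ 1 * (γ 2)), γ 0 * (γ 1 * (γ 3)), γ 0 * (γ 2 * (γ 3)), γ 1 * (γ 2 * (γ 3)), γ 0 * (γ 1 * (γ 2 * (γ 3)))] : Fin 16 → Matrix (Fin 4) (Fin 4) ℂ) 1 = γ 0 := rfl
  have v2 : (![(1 : Matrix (Fin 4) (Fin 4) ℂ), γ 0, γ 1, γ 2, γ 3, γ 0 * (γ 1), γ 0 * (γ 2), γ 0 * (γ 3), γ 1 * (γ 2), γ 1 * (γ 3), γ 2 * (γ 3), γ 0 * (γ 1 * (γ 2)), γ 0 * (γ 1 * (γ 3)), γ 0 * (γ 2 * (γ 3)), γ 1 * (γ 2 * (γ 3)), γ 0 * (γ 1 * (γ 2 * (γ 3)))] : Fin 16 → Matrix (Fin 4) (Fin 4) ℂ) 2 = γ 1 := rfl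
  have v3 : (![(1 : Matrix (Fin 4) (Fin 4) ℂ), γ 0, γ 1, γ 2, γ 3, γ 0 * (γ 1), γ 0 * (γ 2), γ 0 * (γ 3), γ 1 * (γ 2), γ 1 * (γ 3), γ 2 * (γ 3), γ 0 * (γ 1 * (γ 2)), γ 0 * (γ 1 * (γ 3)), γ 0 * (γ 2 * (γ 3)), γ 1 * (γ 2 * (γ 3)), γ 0 * (γ 1 * (γ 2 * (γ 3)))] : Fin 16 → Matrix (Fin 4) (Fin 4) ℂ) 3 = γ 2 := rfl
  have v4 : (![(1 : Matrix (Fin 4) (Fin 4) ℂ), γ 0, γ 1, γ 2, γ 3, γ 0 * (γ 1), γ 0 * (γ 2), γ 0 * (γ 3), γ 1 * (γ 2), γ 1 * (γ 3), γ 2 * (γ 3), γ 0 * (γ 1 * (γ 2)), γ 0 * (γ 1 * (γ 3)), γ 0 * (γ 2 * (γ 3)), γ 1 * (γ 2 * (γ 3)), γ 0 * (γ 1 * (γ 2 * (γ 3)))] : Fin 16 → Matrix (Fin 4) (Fin 4) ℂ) 4 = γ 3 := rfl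
  have v5 : (![(1 : Matrix (Fin 4) (Fin 4) ℂ), γ 0, γ 1, γ 2, γ 3, γ 0 * (γ 1), γ 0 * (γ 2), γ 0 * (γ 3), γ 1 * (γ 2), γ 1 * (γ 3), γ 2 * (γ 3), γ 0 * (γ 1 * (γ 2)), γ 0 * (γ 1 * (γ 3)), γ 0 * (γ 2 * (γ 3)), γ 1 * (γ 2 * (γ 3)), γ 0 * (γ 1 * (γ 2 * (γ 3)))] : Fin 16 → Matrix (Fin 4) (Fin 4) ℂ) 5 = γ 0 * (γ 1) := rfl
  have v6 : (![(1 : Matrix (Fin 4) (Fin 4) ℂ), γ 0, γ 1, γ 2, γ 3, γ 0 * (γ 1), γ 0 * (γ 2), γ 0 * (γ 3), γ 1 * (γ 2), γ 1 * (γ 3), γ 2 * (γ 3), γ 0 * (γ 1 * (γ 2)), γ 0 * (γ 1 * (γ 3)), γ 0 * (γ 2 * (γ 3)), γ 1 * (γ 2 * (γ 3)), γ 0 * (γ 1 * (γ 2 * (γ 3)))] : Fin 16 → Matrix (Fin 4) (Fin 4) ℂ) 6 = γ 0 * (γ 2) := rfl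
  have v7 : (![(1 : Matrix (Fin 4) (Fin 4) ℂ), γ 0, γ 1, γ 2, γ 3, γ 0 * (γ 1), γ 0 * (γ 2), γ 0 * (γ 3), γ 1 * (γ 2), γ 1 * (γ 3), γ 2 * (γ 3), γ 0 * (γ 1 * (γ 2)), γ 0 * (γ 1 * (γ 3)), γ 0 * (γ 2 * (γ 3)), γ 1 * (γ 2 * (γ 3)), γ 0 * (γ 1 * (γ 2 * (γ 3)))] : Fin 16 → Matrix (Fin 4) (Fin 4) ℂ) 7 = γ 0 * (γ 3) := rfl
  have v8 : (![(1 : Matrix (Fin 4) (Fin 4) ℂ), γ 0, γ 1, γ 2, γ 3, γ 0 * (γ 1), γ 0 * (γ 2), γ 0 * (γ 3), γ 1 * (γ 2), γ 1 * (γ 3), γ 2 * (γ 3), γ 0 * (γ 1 * (γ 2)), γ 0 * (γ 1 * (γ 3)), γ 0 * (γ 2 * (γ 3)), γ 1 * (γ 2 * (γ 3)), γ 0 * (γ 1 * (γ 2 * (γ 3)))] : Fin 16 → Matrix (Fin 4) (Fin 4) ℂ) 8 = γ 1 * (γ 2) := rfl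
  have v9 : (![(1 : Matrix (Fin 4) (Fin 4) ℂ), γ 0, γ 1, γ 2, γ 3, γ 0 * (γ 1), γ 0 * (γ 2), γ 0 * (γ 3), γ 1 * (γ 2), γ 1 * (γ 3), γ 2 * (γ 3), γ 0 * (γ 1 * (γ 2)), γ 0 * (γ 1 * (γ 3)), γ 0 * (γ 2 * (γ 3)), γ 1 * (γ 2 * (γ 3)), γ 0 * (γ 1 * (γ 2 * (γ 3)))] : Fin 16 → Matrix (Fin 4) (Fin 4) ℂ) 9 = γ 1 * (γ 3) := rfl
  have v10 : (![(1 : Matrix (Fin 4) (Fin 4) ℂ), γ 0, γ 1, γ 2, γ 3, γ 0 * (γ 1), γ 0 * (γ 2), γ 0 * (γ 3), γ 1 * (γ 2), γ 1 * (γ 3), γ 2 * (γ 3), γ 0 * (γ 1 * (γ 2)), γ 0 * (γ 1 * (γ 3)), γ 0 * (γ 2 * (γ 3)), γ 1 * (γ 2 * (γ 3)), γ 0 * (γ 1 * (γ 2 * (γ 3)))] : Fin 16 → Matrix (Fin 4) (Fin 4) ℂ) 10 = γ 2 * (γ 3) := rfl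
  have v11 : (![(1 : Matrix (Fin 4) (Fin 4) ℂ), γ 0, γ 1, γ 2, γ 3, γ 0 * (γ 1), γ 0 * (γ 2), γ 0 * (γ 3), γ 1 * (γ 2), γ 1 * (γ 3), γ 2 * (γ 3), γ 0 * (γ 1 * (γ 2)), γ 0 * (γ 1 * (γ 3)), γ 0 * (γ 2 * (γ 3)), γ 1 * (γ 2 * (γ 3)), γ 0 * (γ 1 * (γ 2 * (γ 3)))] : Fin 16 → Matrix (Fin 4) (Fin 4) ℂ) 11 = γ 0 * (γ 1 * (γ 2)) := rfl
  have v12 : (![(1 : Matrix (Fin 4) (Fin 4) ℂ), γ 0, γ 1, γ 2, γ 3, γ 0 * (γ 1), γ 0 * (γ 2), γ 0 * (γ 3), γ 1 * (γ 2), γ 1 * (γ 3), γ 2 * (γ 3), γ 0 * (γ 1 * (γ 2)), γ 0 * (γ 1 * (γ 3)), γ 0 * (γ 2 * (γ 3)), γ 1 * (γ 2 * (γ 3)), γ 0 * (γ 1 * (γ 2 * (γ 3)))] : Fin 16 → Matrix (Fin 4) (Fin 4) ℂ) 12 = γ 0 * (γ 1 * (γ 3)) := rfl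
  have v13 : (![(1 : Matrix (Fin 4) (Fin 4) ℂ), γ 0, γ 1, γ 2, γ 3, γ 0 * (γ 1), γ 0 * (γ 2), γ 0 * (γ 3), γ 1 * (γ 2), γ 1 * (γ 3), γ 2 * (γ 3), γ 0 * (γ 1 * (γ 2)), γ 0 * (γ 1 * (γ 3)), γ 0 * (γ 2 * (γ 3)), γ 1 * (γ 2 * (γ 3)), γ 0 * (γ 1 * (γ 2 * (γ 3)))] : Fin 16 → Matrix (Fin 4) (Fin 4) ℂ) 13 = γ 0 * (γ 2 * (γ 3)) := rfl
  have v14 : (![(1 : Matrix (Fin 4) (Fin 4) ℂ), γ 0, γ 1, γ 2, γ 3, γ 0 * (γ 1), γ 0 * (γ 2), γ 0 * (γ 3), γ 1 * (γ 2), γ 1 * (γ 3), γ 2 * (γ 3), γ 0 * (γ 1 * (γ 2)), γ 0 * (γ 1 * (γ 3)), γ 0 * (γ 2 * (γ 3)), γ 1 * (γ 2 * (γ 3)), γ 0 * (γ 1 * (γ 2 * (γ 3)))] : Fin 16 → Matrix (Fin 4) (Fin 4) ℂ) 14 = γ 1 * (γ 2 * (γ 3)) := rfl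
  have v15 : (![(1 : Matrix (Fin 4) (Fin 4) ℂ), γ 0, γ 1, γ 2, γ 3, γ 0 * (γ 1), γ 0 * (γ 2), γ 0 * (γ 3), γ 1 * (γ 2), γ 1 * (γ 3), γ 2 * (γ 3), γ 0 * (γ 1 * (γ 2)), γ 0 * (γ 1 * (γ 3)), γ 0 * (γ 2 * (γ 3)), γ 1 * (γ 2 * (γ 3)), γ 0 * (γ 1 * (γ 2 * (γ 3)))] : Fin 16 → Matrix (Fin 4) (Fin 4) ℂ) 15 = γ 0 * (γ 1 * (γ 2 * (γ 3))) := rfl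
  have hE : LinearIndependent ℂ (![(1 : Matrix (Fin 4) (Fin 4) ℂ), γ 0, γ 1, γ 2, γ 3, γ 0 * (γ 1), γ 0 * (γ 2), γ 0 * (γ 3), γ 1 * (γ 2), γ 1 * (γ 3), γ 2 * (γ 3), γ 0 * (γ 1 * (γ 2)), γ 0 * (γ 1 * (γ 3)), γ 0 * (γ 2 * (γ 3)), γ 1 * (γ 2 * (γ 3)), γ 0 * (γ 1 * (γ 2 * (γ 3)))] : Fin 16 → Matrix (Fin 4) (Fin 4) ℂ) := by
    rw [Fintype.linearIndependent_iff]
    intro c hc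
    rw [sum16] at hc
    rw [v0, v1, v2, v3, v4, v5, v6, v7, v8, v9, v10, v11, v12, v13, v14, v15] at hc
    exact key16 c hc
  have hspan : Submodule.span ℂ (Set.range (![(1 : Matrix (Fin 4) (Fin 4) ℂ), γ 0, γ 1, γ 2, γ 3, γ 0 * (γ 1), γ 0 * (γ 2), γ 0 * (γ 3), γ 1 * (γ 2), γ 1 * (γ 3), γ 2 * (γ 3), γ 0 * (γ 1 * (γ 2)), γ 0 * (γ 1 * (γ 3)), γ 0 * (γ 2 * (γ 3)), γ 1 * (γ 2 * (γ 3)), γ 0 * (γ 1 * (γ 2 * (γ 3)))] : Fin 16 → Matrix (Fin 4) (Fin 4) ℂ)) = ⊤ :=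
    hE.span_eq_top_of_card_eq_finrank (by simp [Module.finrank_matrix])
  have schur : ∀ B : Matrix (Fin 4) (Fin 4) ℂ, (∀ μ, γ μ * B = B * γ μ) → ∃ b : ℂ, B = b • 1 := by
    intro B hB
    have hB' : ∀ (μ : Fin 4) (x : Matrix (Fin 4) (Fin 4) ℂ), γ μ * (B * x) = B * (γ μ * x) := by
      intro μ x; rw [← mul_assoc, hB, mul_assoc]
    have hcommE : ∀ i : Fin 16, (![(1 : Matrix (Fin 4) (Fin 4) ℂ), γ 0, γ 1, γ 2, γ 3, γ 0 * (γ 1), γ 0 * (γ 2), γ 0 * (γ 3), γ 1 * (γ 2), γ 1 * (γ 3), γ 2 * (γ 3), γ 0 * (γ 1 * (γ 2)), γ 0 * (γ 1 * (γ 3)), γ 0 * (γ 2 * (γ 3)), γ 1 * (γ 2 * (γ 3)), γ 0 * (γ 1 * (γ 2 * (γ 3)))] : Fin 16 → Matrix (Fin 4) (Fin 4) ℂ) i * B = B * (![(1 : Matrix (Fin 4) (Fin 4) ℂ), γ 0, γ 1, γ 2, γ 3, γ 0 * (γ 1), γ 0 * (γ 2), γ 0 * (γ 3), γ 1 * (γ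 2), γ 1 * (γ 3), γ 2 * (γ 3), γ 0 * (γ 1 * (γ 2)), γ 0 * (γ 1 * (γ 3)), γ 0 * (γ 2 * (γ 3)), γ 1 * (γ 2 * (γ 3)), γ 0 * (γ 1 * (γ 2 * (γ 3)))] : Fin 16 → Matrix (Fin 4) (Fin 4) ℂ) i := by
      intro i; fin_cases i
      · show ((1 : Matrix (Fin 4) (Fin 4) ℂ)) * B = B * ((1 : Matrix (Fin 4) (Fin 4) ℂ))
        rw [one_mul, mul_one]
      · show (γ 0) * B = B * (γ 0)
        exact hB 0
      · show (γ 1) * B = B * (γ 1)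
        exact hB 1
      · show (γ 2) * B = B * (γ 2)
        exact hB 2
      · show (γ 3) * B = B * (γ 3)
        exact hB 3
      · show (γ 0 * (γ 1)) * B = B * (γ 0 * (γ 1))
        simp only [mul_assoc, hB, hB']
      · show (γ 0 * (γ 2)) * B = B * (γ 0 * (γ 2))
        simp only [mul_assoc, hB, hB']
      · show (γ 0 * (γ 3)) * B = B * (γ 0 * (γ 3))
        simp only [mul_assoc, hB, hB']
      · show (γ 1 * (γ 2)) * B = B * (γ 1 * (γ 2))
        simp only [mul_assoc, hB, hB']
      · show (γ 1 * (γ 3)) * B = B * (γ 1 * (γ 3))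
        simp only [mul_assoc, hB, hB']
      · show (γ 2 * (γ 3)) * B = B * (γ 2 * (γ 3))
        simp only [mul_assoc, hB, hB']
      · show (γ 0 * (γ 1 * (γ 2))) * B = B * (γ 0 * (γ 1 * (γ 2)))
        simp only [mul_assoc, hB, hB']
      · show (γ 0 * (γ 1 * (γ 3))) * B = B * (γ 0 * (γ 1 * (γ 3)))
        simp only [mul_assoc, hB, hB']
      · show (γ 0 * (γ 2 * (γ 3))) * B = B * (γ 0 * (γ 2 * (γ 3)))
        simp only [mul_assoc, hB, hB']
      · show (γ 1 * (γ 2 * (γ 3))) * B = B * (γ 1 * (γ 2 * (γ 3)))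
        simp only [mul_assoc, hB, hB']
      · show (γ 0 * (γ 1 * (γ 2 * (γ 3)))) * B = B * (γ 0 * (γ 1 * (γ 2 * (γ 3))))
        simp only [mul_assoc, hB, hB']
    have hall : ∀ X : Matrix (Fin 4) (Fin 4) ℂ, X * B = B * X := by
      intro X
      have hX : X ∈ Submodule.span ℂ (Set.range (![(1 : Matrix (Fin 4) (Fin 4) ℂ), γ 0, γ 1, γ 2, γ 3, γ 0 * (γ 1), γ 0 * (γ 2), γ 0 * (γ 3), γ 1 * (γ 2), γ 1 * (γ 3), γ 2 * (γ 3), γ 0 * (γ 1 * (γ 2)), γ 0 * (γ 1 * (γ 3)), γ 0 * (γ 2 * (γ 3)), γ 1 * (γ 2 * (γ 3)), γ 0 * (γ 1 * (γ 2 * (γ 3)))] : Fin 16 → Matrix (Fin 4) (Fin 4) ℂ)) := by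
        rw [hspan]; trivial
      induction hX using Submodule.span_induction with
      | mem x h => obtain ⟨i, rfl⟩ := h; exact hcommE i
      | zero => rw [zero_mul, mul_zero]
      | add x y hx hy ihx ihy => rw [add_mul, mul_add, ihx, ihy]
      | smul a x hx ih => rw [smul_mul_assoc, mul_smul_comm, ih]
    obtain ⟨b, hb⟩ := Matrix.mem_range_scalar_of_commute_single (fun i j _ => hall _)
    exact ⟨b, by rw [← hb, Matrix.scalar_apply, Matrix.smul_one_eq_diagonal]⟩
  have hdu : IsUnit C.det := by rw [hdet]; exact isUnit_one
  have hC1 : C * C⁻¹ = 1 := Matrix.mul_nonsing_inv _ hdu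
  have hC2 : C⁻¹ * C = 1 := Matrix.nonsing_inv_mul _ hdu
  have hCiT : (C⁻¹)ᵀ * Cᵀ = 1 := by rw [← Matrix.transpose_mul, hC1, Matrix.transpose_one]
  have htr : ∀ μ, Cᵀ * (γ μ)ᵀ = -(γ μ * Cᵀ) := by
    intro μ
    have h := congrArg Matrix.transpose (hconj μ)
    simp only [Matrix.transpose_mul, Matrix.transpose_neg, Matrix.transpose_transpose] at h
    have h2 := congrArg (fun X => X * Cᵀ) h
    simpa only [mul_assoc, hCiT, mul_one, neg_mul] using h2
  have hBcomm : ∀ μ, γ μ * (Cᵀ * C⁻¹) = (Cᵀ * C⁻¹) * γ μ := by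
    intro μ
    have h1 : C⁻¹ * γ μ = -((γ μ)ᵀ * C⁻¹) := by
      have h2 := congrArg (fun X => X * C⁻¹) (hconj μ)
      simpa only [mul_assoc, hC1, mul_one, neg_mul] using h2
    have h3 : Cᵀ * C⁻¹ * γ μ = γ μ * (Cᵀ * C⁻¹) := by
      rw [mul_assoc, h1, mul_neg, ← mul_assoc, htr μ, neg_mul, neg_neg, mul_assoc]
    exact h3.symm
  obtain ⟨b, hb⟩ := schur (Cᵀ * C⁻¹) hBcomm
  have hCT : Cᵀ = b • C := by
    have h := congrArg (fun X => X * C) hb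
    simpa only [mul_assoc, hC2, mul_one, smul_mul_assoc, one_mul] using h
  have hCne : C ≠ 0 := by
    intro h0
    rw [h0, Matrix.det_zero] at hdet
    exact zero_ne_one hdet
  have hb2 : b * b = 1 := by
    have h := congrArg Matrix.transpose hCT
    rw [Matrix.transpose_smul, Matrix.transpose_transpose, hCT, smul_smul] at h
    have h0 : (b * b - 1) • C = 0 := by rw [sub_smul, one_smul, ← h, sub_self]
    rcases smul_eq_zero.mp h0 with h1 | h1
    · linear_combination h1
    · exact absurd h1 hCne
  have hbneg : b = -1 := by
    have hfac : (b - 1) * (b + 1) = 0 := by linear_combination hb2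
    rcases mul_eq_zero.mp hfac with h1 | h1
    · exfalso
      have hCsymm : Cᵀ = C := by rw [hCT, show b = 1 from by linear_combination h1, one_smul]
      have hker : LinearMap.ker (LinearMap.mulRight ℂ C) = ⊥ := by
        rw [LinearMap.ker_eq_bot]
        intro X Y hXY
        simp only [LinearMap.mulRight_apply] at hXY
        have h2 := congrArg (fun Z => Z * C⁻¹) hXY
        simpa only [mul_assoc, hC1, mul_one] using h2
      have hemb : Function.Injective (fun k : Fin 10 => (⟨k.1 + 1, by omega⟩ : Fin 16)) := by
        intro a b' h; simpa [Fin.ext_iff] using h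
      have hE10 := hE.comp _ hemb
      have heq : ((![(1 : Matrix (Fin 4) (Fin 4) ℂ), γ 0, γ 1, γ 2, γ 3, γ 0 * (γ 1), γ 0 * (γ 2), γ 0 * (γ 3), γ 1 * (γ 2), γ 1 * (γ 3), γ 2 * (γ 3), γ 0 * (γ 1 * (γ 2)), γ 0 * (γ 1 * (γ 3)), γ 0 * (γ 2 * (γ 3)), γ 1 * (γ 2 * (γ 3)), γ 0 * (γ 1 * (γ 2 * (γ 3)))] : Fin 16 → Matrix (Fin 4) (Fin 4) ℂ) ∘ (fun k : Fin 10 => (⟨k.1 + 1, by omega⟩ : Fin 16))) = (![γ 0, γ 1, γ 2, γ 3, γ 0 * (γ 1), γ 0 * (γ 2), γ 0 * (γ 3), γ 1 * (γ 2), γ 1 * (γ 3), γ 2 * (γ 3)] : Fin 10 → Matrix (Fin 4) (Fin 4) ℂ) := by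
        funext k; fin_cases k <;> rfl
      rw [heq] at hE10
      have hmul : LinearIndependent ℂ (fun k : Fin 10 => (![γ 0, γ 1, γ 2, γ 3, γ 0 * (γ 1), γ 0 * (γ 2), γ 0 * (γ 3), γ 1 * (γ 2), γ 1 * (γ 3), γ 2 * (γ 3)] : Fin 10 → Matrix (Fin 4) (Fin 4) ℂ) k * C) :=
        hE10.map' (LinearMap.mulRight ℂ C) hker
      have hanti10 : ∀ k : Fin 10, ((![γ 0, γ 1, γ 2, γ 3, γ 0 * (γ 1), γ 0 * (γ 2), γ 0 * (γ 3), γ 1 * (γ 2), γ 1 * (γ 3), γ 2 * (γ 3)] : Fin 10 → Matrix (Fin 4) (Fin 4) ℂ) k * C)ᵀ = -((![γ 0, γ 1, γ 2, γ 3, γ 0 * (γ 1), γ 0 * (γ 2), γ 0 * (γ 3), γ 1 * (γ 2), γ 1 * (γ 3), γ 2 * (γ 3)] : Fin 10 → Matrix (Fin 4) (Fin 4) ℂ) k * C) := by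
        intro k; fin_cases k
        · show ((γ 0) * C)ᵀ = -((γ 0) * C)
          rw [Matrix.transpose_mul, htr 0, hCsymm]
        · show ((γ 1) * C)ᵀ = -((γ 1) * C)
          rw [Matrix.transpose_mul, htr 1, hCsymm]
        · show ((γ 2) * C)ᵀ = -((γ 2) * C)
          rw [Matrix.transpose_mul, htr 2, hCsymm]
        · show ((γ 3) * C)ᵀ = -((γ 3) * C)
          rw [Matrix.transpose_mul, htr 3, hCsymm]
        · show ((γ 0 * (γ 1)) * C)ᵀ = -((γ 0 * (γ 1)) * C)
          rw [Matrix.transpose_mul, Matrix.transpose_mul, ← mul_assoc, htr 1, neg_mul, mul_assoc, htr 0, mul_neg, neg_neg, hCsymm, ← mul_assoc, w10, neg_mul]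
        · show ((γ 0 * (γ 2)) * C)ᵀ = -((γ 0 * (γ 2)) * C)
          rw [Matrix.transpose_mul, Matrix.transpose_mul, ← mul_assoc, htr 2, neg_mul, mul_assoc, htr 0, mul_neg, neg_neg, hCsymm, ← mul_assoc, w20, neg_mul]
        · show ((γ 0 * (γ 3)) * C)ᵀ = -((γ 0 * (γ 3)) * C)
          rw [Matrix.transpose_mul, Matrix.transpose_mul, ← mul_assoc, htr 3, neg_mul, mul_assoc, htr 0, mul_neg, neg_neg, hCsymm, ← mul_assoc, w30, neg_mul]
        · show ((γ 1 * (γ 2)) * C)ᵀ = -((γ 1 * (γ 2)) * C)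
          rw [Matrix.transpose_mul, Matrix.transpose_mul, ← mul_assoc, htr 2, neg_mul, mul_assoc, htr 1, mul_neg, neg_neg, hCsymm, ← mul_assoc, w21, neg_mul]
        · show ((γ 1 * (γ 3)) * C)ᵀ = -((γ 1 * (γ 3)) * C)
          rw [Matrix.transpose_mul, Matrix.transpose_mul, ← mul_assoc, htr 3, neg_mul, mul_assoc, htr 1, mul_neg, neg_neg, hCsymm, ← mul_assoc, w31, neg_mul]
        · show ((γ 2 * (γ 3)) * C)ᵀ = -((γ 2 * (γ 3)) * C)
          rw [Matrix.transpose_mul, Matrix.transpose_mul, ← mul_assoc, htr 3, neg_mul, mul_assoc, htr 2, mul_neg, neg_neg, hCsymm, ← mul_assoc, w32, neg_mul]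
      set Q : Submodule ℂ (Matrix (Fin 4) (Fin 4) ℂ) :=
        { carrier := {X | Xᵀ = -X}
          add_mem' := by
            intro a' b' ha' hb'
            simp only [Set.mem_setOf_eq] at *
            rw [Matrix.transpose_add, ha', hb', neg_add]
          zero_mem' := by simp
          smul_mem' := by
            intro a' x hx
            simp only [Set.mem_setOf_eq] at *
            rw [Matrix.transpose_smul, hx, smul_neg] } with hQdef
      have hQfam : LinearIndependent ℂ (fun k : Fin 10 => (⟨(![γ 0, γ 1, γ 2, γ 3, γ 0 * (γ 1), γ 0 * (γ 2), γ 0 * (γ 3), γ 1 * (γ 2), γ 1 * (γ 3), γ 2 * (γ 3)] : Fin 10 → Matrix (Fin 4) (Fin 4) ℂ) k * C, hanti10 k⟩ : Q)) :=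
        LinearIndependent.of_comp Q.subtype hmul
      let φ : Q →ₗ[ℂ] (Fin 6 → ℂ) :=
        { toFun := fun X => ![X.1 0 1, X.1 0 2, X.1 0 3, X.1 1 2, X.1 1 3, X.1 2 3]
          map_add' := by intro x y; funext k; fin_cases k <;> rfl
          map_smul' := by intro m x; funext k; fin_cases k <;> rfl }
      have hφinj : Function.Injective φ := by
        rw [← LinearMap.ker_eq_bot, LinearMap.ker_eq_bot']
        rintro ⟨X, hX⟩ hφX
        have hXe : ∀ i j : Fin 4, X j i = -(X i j) := by
          intro i j
          have h := congrFun (congrFun hX i) j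
          simpa [Matrix.transpose_apply, Matrix.neg_apply] using h
        have e01 : X 0 1 = 0 := congrFun hφX 0
        have e02 : X 0 2 = 0 := congrFun hφX 1
        have e03 : X 0 3 = 0 := congrFun hφX 2
        have e12 : X 1 2 = 0 := congrFun hφX 3
        have e13 : X 1 3 = 0 := congrFun hφX 4
        have e23 : X 2 3 = 0 := congrFun hφX 5
        have d00 : X 0 0 = 0 := by have := hXe 0 0; linear_combination this / 2
        have d11 : X 1 1 = 0 := by have := hXe 1 1; linear_combination this / 2
        have d22 : X 2 2 = 0 := by have := hXe 2 2; linear_combination this / 2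
        have d33 : X 3 3 = 0 := by have := hXe 3 3; linear_combination this / 2
        have e10 : X 1 0 = 0 := by rw [hXe 0 1, e01, neg_zero]
        have e20 : X 2 0 = 0 := by rw [hXe 0 2, e02, neg_zero]
        have e30 : X 3 0 = 0 := by rw [hXe 0 3, e03, neg_zero]
        have e21 : X 2 1 = 0 := by rw [hXe 1 2, e12, neg_zero]
        have e31 : X 3 1 = 0 := by rw [hXe 1 3, e13, neg_zero]
        have e32 : X 3 2 = 0 := by rw [hXe 2 3, e23, neg_zero]
        refine Subtype.ext ?_
        show X = 0
        ext i j
        fin_cases i <;> fin_cases j <;> assumption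
      have hcard := hQfam.fintype_card_le_finrank
      have hle : Module.finrank ℂ Q ≤ 6 := by
        have h := LinearMap.finrank_le_finrank_of_injective hφinj
        simpa [Module.finrank_pi] using h
      rw [Fintype.card_fin] at hcard
      omega
    · linear_combination h1
  have hpart1 : Cᵀ = -C := by rw [hCT, hbneg, neg_smul, one_smul]
  -- Part 2
  have hCc1 : (C.map (starRingEnd ℂ)) * (C⁻¹.map (starRingEnd ℂ)) = 1 := by
    rw [← Matrix.map_mul, hC1, Matrix.map_one _ (map_zero _) (map_one _)]
  have hmn : ∀ M : Matrix (Fin 4) (Fin 4) ℂ, (-M).map (starRingEnd ℂ) = -(M.map (starRingEnd ℂ)) := by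
    intro M; ext i j; simp [Matrix.map_apply, Matrix.neg_apply]
  have hgmap : ∀ μ, (γ μ).map (starRingEnd ℂ) = (γ μ)ᵀ := by
    intro μ; ext i j
    rw [Matrix.map_apply, starRingEnd_apply, Matrix.transpose_apply, ← Matrix.conjTranspose_apply, hherm μ]
  have hgmapT : ∀ μ, ((γ μ)ᵀ).map (starRingEnd ℂ) = γ μ := by
    intro μ; ext i j
    rw [Matrix.map_apply, Matrix.transpose_apply, starRingEnd_apply, ← Matrix.conjTranspose_apply, hherm μ]
  have hconjm : ∀ μ, (C⁻¹.map (starRingEnd ℂ)) * ((γ μ)ᵀ) * (C.map (starRingEnd ℂ)) = -(γ μ) := by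
    intro μ
    have h := congrArg (fun X => X.map (starRingEnd ℂ)) (hconj μ)
    simp only [Matrix.map_mul, hmn, hgmap, hgmapT] at h
    exact h
  have hDcomm : ∀ μ, γ μ * (C * C.map (starRingEnd ℂ)) = (C * C.map (starRingEnd ℂ)) * γ μ := by
    intro μ
    have h3 : (γ μ)ᵀ = -(C⁻¹ * γ μ * C) := by rw [hconj μ, neg_neg]
    have h1 : (C⁻¹.map (starRingEnd ℂ)) * (C⁻¹ * γ μ * C) * (C.map (starRingEnd ℂ)) = γ μ := by
      have h2 := hconjm μ
      rw [h3, mul_neg, neg_mul] at h2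
      exact neg_inj.mp h2
    have h4 : (C * C.map (starRingEnd ℂ)) * γ μ = γ μ * (C * C.map (starRingEnd ℂ)) := by
      conv_lhs => rw [← h1]
      simp only [← mul_assoc]
      rw [mul_assoc C (C.map (starRingEnd ℂ)) (C⁻¹.map (starRingEnd ℂ)), hCc1, mul_one, hC1, one_mul, mul_assoc]
    exact h4.symm
  obtain ⟨d, hd⟩ := schur (C * C.map (starRingEnd ℂ)) hDcomm
  have hskew : ∀ i j : Fin 4, C j i = -(C i j) := by
    intro i j; have h := congrFun (congrFun hpart1 i) j
    simpa [Matrix.transpose_apply, Matrix.neg_apply] using h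
  have htrace1 : Matrix.trace (C * C.map (starRingEnd ℂ)) = d * 4 := by
    rw [hd, Matrix.trace_smul, Matrix.trace_one, Fintype.card_fin, smul_eq_mul]
    norm_num
  have htrace2 : Matrix.trace (C * C.map (starRingEnd ℂ)) = -(((∑ i : Fin 4, ∑ j : Fin 4, Complex.normSq (C i j)) : ℝ) : ℂ) := by
    have hterm : ∀ i j : Fin 4, C i j * (starRingEnd ℂ) (C j i) = -(((Complex.normSq (C i j) : ℝ)) : ℂ) := by
      intro i j
      rw [hskew i j, map_neg, mul_neg, Complex.mul_conj]
    simp only [Matrix.trace, Matrix.diag_apply, Matrix.mul_apply, Matrix.map_apply, hterm,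
      Finset.sum_neg_distrib]
    push_cast
    ring
  have hSnn : (0:ℝ) ≤ ∑ i : Fin 4, ∑ j : Fin 4, Complex.normSq (C i j) :=
    Finset.sum_nonneg fun i _ => Finset.sum_nonneg fun j _ => Complex.normSq_nonneg _
  have hd4 : d ^ 4 = 1 := by
    have hdet2 : Matrix.det (C * C.map (starRingEnd ℂ)) = 1 := by
      rw [Matrix.det_mul, hdet, ← _root_.RingHom.mapMatrix_apply, ← _root_.RingHom.map_det, hdet, _root_.map_one, one_mul]
    rw [hd, Matrix.det_smul, Matrix.det_one, mul_one, Fintype.card_fin] at hdet2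
    exact hdet2
  set S : ℝ := ∑ i : Fin 4, ∑ j : Fin 4, Complex.normSq (C i j) with hSdef
  have hdS : d = -((S/4 : ℝ) : ℂ) := by
    have h := htrace1.symm.trans htrace2
    push_cast
    linear_combination h / 4
  have ht4 : ((S/4 : ℝ))^4 = 1 := by
    have h : ((( S/4 : ℝ)) : ℂ)^4 = 1 := by
      have h2 : d^4 = (((S/4 : ℝ)) : ℂ)^4 := by rw [hdS]; ring
      rw [hd4] at h2; exact h2.symm
    exact_mod_cast h
  have htS : S/4 = 1 := by
    have hfac : (S/4 - 1) * ((S/4 + 1) * ((S/4)^2 + 1)) = 0 := by linear_combination ht4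
    rcases mul_eq_zero.mp hfac with h | h
    · linarith
    rcases mul_eq_zero.mp h with h | h
    · linarith
    · nlinarith [sq_nonneg (S/4)]
  have hdneg : d = -1 := by rw [hdS, htS]; norm_num
  have hCCc : C * C.map (starRingEnd ℂ) = -1 := by rw [hd, hdneg]; simp
  have hCc_eq : C.map (starRingEnd ℂ) = -Cᴴ := by
    ext i j
    rw [Matrix.map_apply, Matrix.neg_apply, Matrix.conjTranspose_apply, hskew i j, star_neg, neg_neg, starRingEnd_apply]
  have hfinal : C * Cᴴ = 1 := by
    have h := hCCc
    rw [hCc_eq, mul_neg] at h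
    exact neg_inj.mp h
  exact ⟨hpart1, (Matrix.inv_eq_right_inv hfinal).symm⟩
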